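/- Consider maps a: ℕ × (0,∞) → ℂ and b: (0,∞) → ℂ. Suppose that for every ε > 0 there exist a_{1,ε}, a_{2,ε}: ℕ × (0,∞) → ℂ with a = a_{1,ε} + a_{2,ε} such that: (1) there is T > 0 with |a_{1,ε}(j,t)| < ε for all t ∈ (0,T) and all j ∈ ℕ; (2) for all t ∈ (0,1] there is N with |a_{2,ε}(j,t)| < ε for all j ≥ N; (3) for all t > 0, liminf_{j→∞} |b(t) − a(j,t)| = 0. Then lim_{t↓0} b(t) = 0. -/

import Mathlib

open Filter Set

theorem stmt_12 (a : ℕ → ℝ → ℂ) (b : ℝ → ℂ)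
    (hsplit : ∀ ε > (0:ℝ), ∃ a₁ a₂ : ℕ → ℝ → ℂ,
      (∀ j : ℕ, ∀ t > (0:ℝ), a j t = a₁ j t + a₂ j t) ∧
      (∃ T > (0:ℝ), ∀ t ∈ Set.Ioo (0:ℝ) T, ∀ j : ℕ, ‖a₁ j t‖ < ε) ∧
      (∀ t ∈ Set.Ioc (0:ℝ) 1, ∃ N : ℕ, ∀ j ≥ N, ‖a₂ j t‖ < ε))
    (hliminf : ∀ t > (0:ℝ), Filter.liminf (fun j : ℕ => ‖b t - a j t‖) atTop = 0) :
    Tendsto b (nhdsWithin 0 (Set.Ioi 0)) (nhds 0) := by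
  rw [Metric.tendsto_nhdsWithin_nhds]
  intro ε hε
  obtain ⟨a₁, a₂, hadd, ⟨T, hT, hT1⟩, h2⟩ := hsplit (ε/3) (by linarith)
  refine ⟨min T 1, lt_min hT one_pos, ?_⟩
  intro t ht hd
  have ht0 : 0 < t := ht
  have htT : t < T := lt_of_lt_of_le (by simpa [Real.dist_eq, abs_of_pos ht0] using hd) (min_le_left _ _)
  have ht1 : t ≤ 1 := le_of_lt (lt_of_lt_of_le (by simpa [Real.dist_eq, abs_of_pos ht0] using hd) (min_le_right _ _))
  obtain ⟨N, hN⟩ := h2 t ⟨ht0, ht1⟩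
  have hco : IsCoboundedUnder (· ≥ ·) atTop (fun j => ‖b t - a j t‖) := by
    apply IsCoboundedUnder.of_frequently_le (a := ‖b t‖ + 2*(ε/3))
    apply Eventually.frequently
    filter_upwards [eventually_ge_atTop N] with j hj
    have h1 := hT1 t ⟨ht0, htT⟩ j
    have h2' := hN j hj
    have : ‖a j t‖ ≤ ‖a₁ j t‖ + ‖a₂ j t‖ := by rw [hadd j t ht0]; exact norm_add_le _ _
    have hb : ‖b t - a j t‖ ≤ ‖b t‖ + ‖a j t‖ := norm_sub_le _ _
    linarith
  have hfreq : ∃ᶠ j in atTop, ‖b t - a j t‖ < ε/3 := by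
    refine frequently_lt_of_liminf_lt hco ?_
    rw [hliminf t ht0]; linarith
  obtain ⟨j, hjN, hj⟩ := (hfreq.and_eventually (eventually_ge_atTop N)).exists
  have key : b t = (b t - a j t) + a₁ j t + a₂ j t := by
    rw [hadd j t ht0]; ring
  have : ‖b t‖ ≤ ‖b t - a j t‖ + ‖a₁ j t‖ + ‖a₂ j t‖ := by
    calc ‖b t‖ = ‖(b t - a j t) + a₁ j t + a₂ j t‖ := by rw [← key]
    _ ≤ ‖(b t - a j t) + a₁ j t‖ + ‖a₂ j t‖ := norm_add_le _ _
    _ ≤ ‖b t - a j t‖ + ‖a₁ j t‖ + ‖a₂ j t‖ := by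
        exact add_le_add_left (norm_add_le (b t - a j t) (a₁ j t)) _
  have h1 := hT1 t ⟨ht0, htT⟩ j
  have h2' := hN j hj
  rw [dist_eq_norm, sub_zero]
  linarith
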